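/- arXiv:2303.10520 — 2 statements merged into one kernel-verified Lean document; each statement's English description precedes it below -/
import Mathlib

section
/- Let X, Y be locally convex Hausdorff topological vector spaces, F : X ⇒ Y a polyhedral convex multifunction, and C ⊆ X a generalized polyhedral convex set. Then F(C) = ⋃_{x ∈ C} F(x) is a polyhedral convex set in Y. -/
/-- A set is polyhedral convex if it is a finite intersection of half-spaces
given by continuous linear functionals. -/
def IsPolyhedralConvex {E : Type*} [AddCommGroup E] [Module ℝ E] [TopologicalSpace E]
    (D : Set E) : Prop :=
  ∃ (n : ℕ) (f : Fin n → E →L[ℝ] ℝ) (α : Fin n → ℝ),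
    D = {x | ∀ i, f i x ≤ α i}

/-- A set is generalized polyhedral convex if it is the intersection of a closed
affine subspace with finitely many half-spaces given by continuous linear functionals. -/
def IsGPC {E : Type*} [AddCommGroup E] [Module ℝ E] [TopologicalSpace E]
    (D : Set E) : Prop :=
  ∃ (n : ℕ) (f : Fin n → E →L[ℝ] ℝ) (α : Fin n → ℝ) (L : AffineSubspace ℝ E),
    IsClosed (L : Set E) ∧ D = {x | x ∈ L ∧ ∀ i, f i x ≤ α i}

set_option linter.unusedSectionVars false


open Finset

lemma exists_real_t {ι : Type*} [Fintype ι] (φ c b : ι → ℝ) :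
    (∃ t : ℝ, ∀ i, φ i + c i * t ≤ b i) ↔
    ((∀ i, c i = 0 → φ i ≤ b i) ∧
     ∀ i j, 0 < c i → c j < 0 → c i * φ j - c j * φ i ≤ c i * b j - c j * b i) := by
  constructor
  · rintro ⟨t, ht⟩
    refine ⟨fun i hi => by simpa [hi] using ht i, fun i j hi hj => ?_⟩
    have h1 : c i * t ≤ b i - φ i := by linarith [ht i]
    have h2 : c j * t ≤ b j - φ j := by linarith [ht j]
    nlinarith [mul_le_mul_of_nonneg_left h2 hi.le,
      mul_le_mul_of_nonneg_left h1 (neg_nonneg.2 hj.le)]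
  · rintro ⟨h0, hpn⟩
    classical
    set u : ι → ℝ := fun k => (b k - φ k) / c k with hu
    have hcu : ∀ k, c k ≠ 0 → c k * u k = b k - φ k := fun k hk => by
      rw [hu]; field_simp
    set P : Finset ι := univ.filter (fun i => 0 < c i) with hP
    set N : Finset ι := univ.filter (fun i => c i < 0) with hN
    by_cases hPe : P.Nonempty
    · refine ⟨P.inf' hPe u, fun i => ?_⟩
      rcases lt_trichotomy (c i) 0 with hci | hci | hci
      · have hiN : ∀ k ∈ P, u i ≤ u k := by
          intro k hk
          have hck : 0 < c k := (mem_filter.1 hk).2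
          nlinarith [hpn k i hck hci, hcu i hci.ne, hcu k hck.ne',
            mul_neg_of_neg_of_pos hci hck]
        have h3 : u i ≤ P.inf' hPe u := le_inf' _ _ hiN
        have h4 : c i * (P.inf' hPe u) ≤ c i * u i :=
          mul_le_mul_of_nonpos_left h3 hci.le
        have := hcu i hci.ne
        linarith
      · simpa [hci] using h0 i hci
      · have h3 : P.inf' hPe u ≤ u i :=
          inf'_le _ (show i ∈ P from mem_filter.2 ⟨mem_univ i, hci⟩)
        have h4 : c i * (P.inf' hPe u) ≤ c i * u i :=
          mul_le_mul_of_nonneg_left h3 hci.le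
        have := hcu i hci.ne'
        linarith
    · by_cases hNe : N.Nonempty
      · refine ⟨N.sup' hNe u, fun i => ?_⟩
        rcases lt_trichotomy (c i) 0 with hci | hci | hci
        · have h3 : u i ≤ N.sup' hNe u :=
            le_sup' u (show i ∈ N from mem_filter.2 ⟨mem_univ i, hci⟩)
          have h4 : c i * (N.sup' hNe u) ≤ c i * u i :=
            mul_le_mul_of_nonpos_left h3 hci.le
          have := hcu i hci.ne
          linarith
        · simpa [hci] using h0 i hci
        · exact absurd (show i ∈ P from mem_filter.2 ⟨mem_univ i, hci⟩)
            (fun h => hPe ⟨i, h⟩)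
      · refine ⟨0, fun i => ?_⟩
        have hci : c i = 0 := by
          rcases lt_trichotomy (c i) 0 with h | h | h
          · exact absurd ⟨i, mem_filter.2 ⟨mem_univ i, h⟩⟩ hNe
          · exact h
          · exact absurd ⟨i, mem_filter.2 ⟨mem_univ i, h⟩⟩ hPe
        simpa [hci] using h0 i hci


lemma expand_aux {m : ℕ} (Aj Ai w : Fin m → ℝ) (ci cj gj gi : ℝ) :
    ci * (gj + ∑ d, Aj d * w d) - cj * (gi + ∑ d, Ai d * w d)
      = ci * gj - cj * gi + ∑ d, (ci * Aj d - cj * Ai d) * w d := by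
  simp only [sub_mul, Finset.sum_sub_distrib, Finset.mul_sum, mul_add, mul_assoc]
  ring


lemma polyhedral_of_fintype {E : Type*} [AddCommGroup E] [Module ℝ E] [TopologicalSpace E]
    {ι : Type*} [Fintype ι] (g : ι → E →L[ℝ] ℝ) (b : ι → ℝ) :
    IsPolyhedralConvex {x : E | ∀ i, g i x ≤ b i} := by
  refine ⟨Fintype.card ι, fun k => g ((Fintype.equivFin ι).symm k),
    fun k => b ((Fintype.equivFin ι).symm k), ?_⟩
  ext x
  simp only [Set.mem_setOf_eq]
  exact ⟨fun h k => h _, fun h i => by simpa using h (Fintype.equivFin ι i)⟩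

lemma fourier_motzkin {E : Type*} [AddCommGroup E] [Module ℝ E] [TopologicalSpace E] :
    ∀ (m : ℕ) {ι : Type} [Fintype ι] (g : ι → E →L[ℝ] ℝ) (A : ι → Fin m → ℝ)
      (b : ι → ℝ),
    IsPolyhedralConvex {y : E | ∃ v : Fin m → ℝ, ∀ i, g i y + ∑ j, A i j * v j ≤ b i} := by
  intro m
  induction m with
  | zero =>
    intro ι _ g A b
    have : {y : E | ∃ v : Fin 0 → ℝ, ∀ i, g i y + ∑ j, A i j * v j ≤ b i}
        = {y : E | ∀ i, g i y ≤ b i} := by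
      ext y; simp
    rw [this]
    exact polyhedral_of_fintype g b
  | succ m ih =>
    intro ι _ g A b
    classical
    set c : ι → ℝ := fun i => A i (Fin.last m) with hc
    -- new system over ι ⊕ ι × ι
    let g' : ι ⊕ ι × ι → E →L[ℝ] ℝ := fun k =>
      match k with
      | .inl i => if c i = 0 then g i else 0
      | .inr (i, j) => if 0 < c i ∧ c j < 0 then c i • g j - c j • g i else 0
    let A' : ι ⊕ ι × ι → Fin m → ℝ := fun k d =>
      match k with
      | .inl i => if c i = 0 then A i d.castSucc else 0
      | .inr (i, j) => if 0 < c i ∧ c j < 0 then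
          c i * A j d.castSucc - c j * A i d.castSucc else 0
    let b' : ι ⊕ ι × ι → ℝ := fun k =>
      match k with
      | .inl i => if c i = 0 then b i else 0
      | .inr (i, j) => if 0 < c i ∧ c j < 0 then c i * b j - c j * b i else 0
    have key : {y : E | ∃ v : Fin (m+1) → ℝ, ∀ i, g i y + ∑ j, A i j * v j ≤ b i}
        = {y : E | ∃ v : Fin m → ℝ, ∀ k, g' k y + ∑ j, A' k j * v j ≤ b' k} := by
      ext y
      simp only [Set.mem_setOf_eq]
      constructor
      · rintro ⟨v, hv⟩
        refine ⟨fun j => v j.castSucc, ?_⟩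
        have hsum : ∀ i, g i y + ∑ j, A i j * v j
            = (g i y + ∑ j : Fin m, A i j.castSucc * v j.castSucc) + c i * v (Fin.last m) := by
          intro i; rw [Fin.sum_univ_castSucc]; ring
        have h2 := (exists_real_t (fun i => g i y + ∑ j : Fin m, A i j.castSucc * v j.castSucc)
          c b).1 ⟨v (Fin.last m), fun i => by rw [← hsum]; exact hv i⟩
        rintro (i | ⟨i, j⟩)
        · by_cases hci : c i = 0
          · simpa [g', A', b', hci] using h2.1 i hci
          · simp [g', A', b', hci]
        · by_cases hij : 0 < c i ∧ c j < 0
          · have := h2.2 i j hij.1 hij.2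
            simp only [g', A', b', if_pos hij, ContinuousLinearMap.coe_sub',
              Pi.sub_apply, ContinuousLinearMap.coe_smul', Pi.smul_apply, smul_eq_mul]
            have hexp := expand_aux (fun d => A j d.castSucc) (fun d => A i d.castSucc)
              (fun d => v d.castSucc) (c i) (c j) ((g j) y) ((g i) y)
            linarith [this, hexp.ge, hexp.le]
          · simp [g', A', b', hij]
      · rintro ⟨w, hw⟩
        have h2 : (∀ i, c i = 0 → (g i y + ∑ j : Fin m, A i j.castSucc * w j) ≤ b i) ∧
            ∀ i j, 0 < c i → c j < 0 →
              c i * (g j y + ∑ d : Fin m, A j d.castSucc * w d)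
                - c j * (g i y + ∑ d : Fin m, A i d.castSucc * w d)
              ≤ c i * b j - c j * b i := by
          constructor
          · intro i hci
            have := hw (.inl i)
            simpa [g', A', b', hci] using this
          · intro i j hi hj
            have := hw (.inr (i, j))
            simp only [g', A', b', if_pos (And.intro hi hj), ContinuousLinearMap.coe_sub',
              Pi.sub_apply, ContinuousLinearMap.coe_smul', Pi.smul_apply, smul_eq_mul] at this
            have hexp := expand_aux (fun d => A j d.castSucc) (fun d => A i d.castSucc)
              w (c i) (c j) ((g j) y) ((g i) y)
            linarith [this, hexp.ge, hexp.le]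
        obtain ⟨t, ht⟩ := (exists_real_t (fun i => g i y + ∑ j : Fin m, A i j.castSucc * w j)
          c b).2 h2
        refine ⟨Fin.snoc w t, fun i => ?_⟩
        have : ∑ j, A i j * (Fin.snoc w t : Fin (m+1) → ℝ) j
            = ∑ j : Fin m, A i j.castSucc * w j + c i * t := by
          rw [Fin.sum_univ_castSucc]
          simp [Fin.snoc_castSucc, Fin.snoc_last, hc]
        rw [this]
        linarith [ht i]
    rw [key]
    exact ih g' A' b'

set_option maxHeartbeats 1000000 in
/-- The image of a generalized polyhedral convex set under a
polyhedral convex multifunction is polyhedral convex. -/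
theorem image_of_gpc_under_polyhedral_multifunction
    {X Y : Type*}
    [AddCommGroup X] [Module ℝ X] [TopologicalSpace X] [IsTopologicalAddGroup X]
    [ContinuousSMul ℝ X] [LocallyConvexSpace ℝ X] [T2Space X]
    [AddCommGroup Y] [Module ℝ Y] [TopologicalSpace Y] [IsTopologicalAddGroup Y]
    [ContinuousSMul ℝ Y] [LocallyConvexSpace ℝ Y] [T2Space Y]
    (G : Set (X × Y)) (hG : IsPolyhedralConvex G)
    (C : Set X) (hC : IsGPC C) :
    IsPolyhedralConvex {y : Y | ∃ x ∈ C, (x, y) ∈ G} := by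
  classical
  obtain ⟨n, f, α, rfl⟩ := hG
  obtain ⟨m, hfun, β, L, -, rfl⟩ := hC
  by_cases hCne : ({x | x ∈ L ∧ ∀ j, hfun j x ≤ β j} : Set X).Nonempty
  swap
  · refine ⟨1, fun _ => 0, fun _ => -1, ?_⟩
    ext y
    simp only [Set.mem_setOf_eq, ContinuousLinearMap.zero_apply]
    constructor
    · rintro ⟨x, hx, -⟩
      exact absurd ⟨x, hx⟩ hCne
    · intro hy
      linarith [hy 0]
  obtain ⟨x₀, hx₀⟩ := hCne
  -- decompose functionals on the product
  set p : Fin n → X →L[ℝ] ℝ := fun i => (f i).comp (ContinuousLinearMap.inl ℝ X Y) with hp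
  set q : Fin n → Y →L[ℝ] ℝ := fun i => (f i).comp (ContinuousLinearMap.inr ℝ X Y) with hq
  have hdecomp : ∀ (i : Fin n) (x : X) (y : Y), f i (x, y) = p i x + q i y := by
    intro i x y
    have : (x, y) = (x, (0 : Y)) + ((0 : X), y) := by simp
    rw [this, map_add]
    simp [hp, hq]
  -- the finite-dimensional reduction map
  set Φ : X →ₗ[ℝ] (Fin (m + n) → ℝ) := LinearMap.pi (fun k =>
    Fin.addCases (motive := fun _ => X →ₗ[ℝ] ℝ)
      (fun j => (hfun j : X →L[ℝ] ℝ).toLinearMap)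
      (fun i => (p i).toLinearMap) k) with hΦ
  have hΦl : ∀ (x : X) (j : Fin m), Φ x (Fin.castAdd n j) = hfun j x := by
    intro x j
    rw [hΦ, LinearMap.pi_apply, Fin.addCases_left]
    rfl
  have hΦr : ∀ (x : X) (i : Fin n), Φ x (Fin.natAdd m i) = p i x := by
    intro x i
    rw [hΦ, LinearMap.pi_apply, Fin.addCases_right]
    rfl
  set T : AffineSubspace ℝ (Fin (m + n) → ℝ) := L.map Φ.toAffineMap with hT
  set a : (Fin (m + n) → ℝ) := Φ x₀ with ha
  have haT : a ∈ T := AffineSubspace.mem_map.2 ⟨x₀, hx₀.1, rfl⟩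
  set W : Submodule ℝ (Fin (m + n) → ℝ) := T.direction with hW
  obtain ⟨W', hWc⟩ := Submodule.exists_isCompl W
  set π : (Fin (m + n) → ℝ) →ₗ[ℝ] W' := W'.linearProjOfIsCompl W hWc.symm with hπ
  have hker : LinearMap.ker π = W := Submodule.linearProjOfIsCompl_ker hWc.symm
  set B := Module.finBasis ℝ W' with hB
  set K := Module.finrank ℝ W' with hK
  set ℓ : Fin K → (Fin (m + n) → ℝ) →ₗ[ℝ] ℝ := fun k => (B.coord k).comp π with hℓ
  have hmemT : ∀ v : (Fin (m + n) → ℝ), v ∈ T ↔ ∀ k, ℓ k v = ℓ k a := by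
    intro v
    rw [← AffineSubspace.vsub_right_mem_direction_iff_mem haT v]
    have : v -ᵥ a = v - a := rfl
    rw [this, ← hW, ← hker, LinearMap.mem_ker]
    constructor
    · intro h k
      have : ℓ k (v - a) = 0 := by
        rw [hℓ]
        simp [LinearMap.comp_apply, h]
      rw [map_sub] at this
      linarith
    · intro h
      refine B.ext_elem fun k => ?_
      have := h k
      rw [hℓ] at this
      simp only [LinearMap.comp_apply, Module.Basis.coord_apply] at this ⊢
      rw [map_sub, map_sub]
      simp [this]
  -- helper sum identities
  have S1 : ∀ (φ : (Fin (m + n) → ℝ) →ₗ[ℝ] ℝ) (v : (Fin (m + n) → ℝ)),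
      ∑ d, φ (fun j' => if d = j' then 1 else 0) * v d = φ v := by
    intro φ v
    rw [LinearMap.pi_apply_eq_sum_univ φ v]
    exact Finset.sum_congr rfl fun d _ => by rw [smul_eq_mul, mul_comm]
  have S2 : ∀ (c0 : Fin (m + n)) (v : (Fin (m + n) → ℝ)),
      ∑ d, (if d = c0 then (1:ℝ) else 0) * v d = v c0 := by
    intro c0 v
    rw [Finset.sum_congr rfl (fun d _ => show (if d = c0 then (1:ℝ) else 0) * v d
      = if d = c0 then v d else 0 by split <;> simp)]
    simp [Finset.sum_ite_eq']
  -- the constraint system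
  set Gk : (Fin K ⊕ Fin K) ⊕ (Fin m ⊕ Fin n) → Y →L[ℝ] ℝ := fun k =>
    match k with
    | .inl _ => 0
    | .inr (.inl _) => 0
    | .inr (.inr i) => q i
    with hGk
  set Arow : (Fin K ⊕ Fin K) ⊕ (Fin m ⊕ Fin n) → Fin (m + n) → ℝ := fun k d =>
    match k with
    | .inl (.inl k') => ℓ k' (fun j' => if d = j' then 1 else 0)
    | .inl (.inr k') => -(ℓ k' (fun j' => if d = j' then 1 else 0))
    | .inr (.inl j) => if d = Fin.castAdd n j then 1 else 0
    | .inr (.inr i) => if d = Fin.natAdd m i then 1 else 0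
    with hArow
  set brow : (Fin K ⊕ Fin K) ⊕ (Fin m ⊕ Fin n) → ℝ := fun k =>
    match k with
    | .inl (.inl k') => ℓ k' a
    | .inl (.inr k') => -(ℓ k' a)
    | .inr (.inl j) => β j
    | .inr (.inr i) => α i
    with hbrow
  have key : {y : Y | ∃ x ∈ {x | x ∈ L ∧ ∀ j, hfun j x ≤ β j},
        (x, y) ∈ {z : X × Y | ∀ i, f i z ≤ α i}}
      = {y : Y | ∃ v : (Fin (m + n) → ℝ), ∀ k, Gk k y + ∑ d, Arow k d * v d ≤ brow k} := by
    ext y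
    simp only [Set.mem_setOf_eq]
    constructor
    · rintro ⟨x, ⟨hxL, hxβ⟩, hxy⟩
      refine ⟨Φ x, ?_⟩
      have hxT : Φ x ∈ T := AffineSubspace.mem_map.2 ⟨x, hxL, rfl⟩
      have hxℓ : ∀ k, ℓ k (Φ x) = ℓ k a := (hmemT (Φ x)).1 hxT
      rintro ((k' | k') | (j | i))
      · simp only [hGk, hArow, hbrow, ContinuousLinearMap.zero_apply, zero_add]
        rw [S1]
        exact (hxℓ k').le
      · simp only [hGk, hArow, hbrow, ContinuousLinearMap.zero_apply, zero_add]
        have : ∑ d, -(ℓ k' fun j' => if d = j' then 1 else 0) * Φ x d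
            = -(∑ d, (ℓ k' fun j' => if d = j' then 1 else 0) * Φ x d) := by
          rw [← Finset.sum_neg_distrib]
          exact Finset.sum_congr rfl fun d _ => by ring
        rw [this, S1, hxℓ k']
      · simp only [hGk, hArow, hbrow, ContinuousLinearMap.zero_apply, zero_add]
        rw [S2, hΦl]
        exact hxβ j
      · simp only [hGk, hArow, hbrow]
        rw [S2, hΦr]
        have := hxy i
        rw [hdecomp i x y] at this
        linarith
    · rintro ⟨v, hv⟩
      have hvℓ : ∀ k, ℓ k v = ℓ k a := by
        intro k
        have h1 := hv (.inl (.inl k))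
        have h2 := hv (.inl (.inr k))
        simp only [hGk, hArow, hbrow, ContinuousLinearMap.zero_apply, zero_add] at h1 h2
        rw [S1] at h1
        have : ∑ d, -(ℓ k fun j' => if d = j' then 1 else 0) * v d
            = -(∑ d, (ℓ k fun j' => if d = j' then 1 else 0) * v d) := by
          rw [← Finset.sum_neg_distrib]
          exact Finset.sum_congr rfl fun d _ => by ring
        rw [this, S1] at h2
        linarith
      obtain ⟨x, hxL, hxv⟩ := AffineSubspace.mem_map.1 ((hmemT v).2 hvℓ)
      have hxv : Φ x = v := hxv
      refine ⟨x, ⟨hxL, fun j => ?_⟩, fun i => ?_⟩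
      · have := hv (.inr (.inl j))
        simp only [hGk, hArow, hbrow, ContinuousLinearMap.zero_apply, zero_add] at this
        rw [S2] at this
        rw [← hΦl x j, hxv]
        exact this
      · have := hv (.inr (.inr i))
        simp only [hGk, hArow, hbrow] at this
        rw [S2] at this
        rw [hdecomp i x y, ← hΦr x i, hxv]
        linarith
  rw [key]
  exact fourier_motzkin (m + n) Gk Arow brow
end

section
/- Let X and Y be Fréchet spaces and T : X → Y a surjective continuous linear map. If D ⊆ X is a polyhedral convex set, then T(D) is a polyhedral convex set in Y. -/
open Filter Set Topology Pointwise Function Uniformity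

section OpenMapping

variable {X Y : Type*}
  [AddCommGroup X] [Module ℝ X] [UniformSpace X] [IsUniformAddGroup X]
  [ContinuousSMul ℝ X] [CompleteSpace X] [FirstCountableTopology X]
  [AddCommGroup Y] [Module ℝ Y] [UniformSpace Y] [IsUniformAddGroup Y]
  [ContinuousSMul ℝ Y] [T2Space Y] [CompleteSpace Y] [FirstCountableTopology Y]

lemma baire_of_complete_firstCountable : BaireSpace Y := by
  have h1 : (𝓤 Y).IsCountablyGenerated := by
    rw [uniformity_eq_comap_nhds_zero Y]
    exact Filter.comap.isCountablyGenerated _ _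
  exact BaireSpace.of_completelyPseudoMetrizable

/-- Baire-category half of the open mapping theorem. -/
lemma closure_image_mem_nhds (T : X →L[ℝ] Y) (hT : Function.Surjective T)
    {V : Set X} (hV : V ∈ 𝓝 (0 : X)) : closure (T '' V) ∈ 𝓝 (0 : Y) := by
  have hB : BaireSpace Y := baire_of_complete_firstCountable
  have : Nonempty Y := ⟨0⟩
  obtain ⟨W, hW, hWV⟩ := exists_nhds_half_neg hV
  have habs : Absorbent ℝ W := absorbent_nhds_zero hW
  set S : Set Y := closure (T '' W) with hS
  have hclosed : ∀ n : ℕ, IsClosed (closure (((n : ℝ) + 1) • (T '' W))) :=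
    fun n => isClosed_closure
  have hunion : ⋃ n : ℕ, closure (((n : ℝ) + 1) • (T '' W)) = univ := by
    rw [eq_univ_iff_forall]
    intro y
    obtain ⟨x, rfl⟩ := hT y
    obtain ⟨r, hr, hrc⟩ := (habs x).exists_pos
    obtain ⟨n, hn⟩ := exists_nat_ge r
    have hc : x ∈ ((n : ℝ) + 1) • W := by
      refine hrc ((n : ℝ) + 1) ?_ rfl
      rw [Real.norm_eq_abs, abs_of_pos (by positivity)]
      linarith
    obtain ⟨w, hw, rfl⟩ := hc
    refine mem_iUnion.2 ⟨n, subset_closure ?_⟩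
    rw [map_smul]
    exact smul_mem_smul_set (mem_image_of_mem _ hw)
  obtain ⟨n, hn⟩ := nonempty_interior_of_iUnion_of_closed hclosed hunion
  have hc0 : ((n : ℝ) + 1) ≠ 0 := by positivity
  have hint : (interior S).Nonempty := by
    rw [closure_smul₀' hc0, interior_smul₀ hc0] at hn
    exact Set.smul_set_nonempty.1 hn
  obtain ⟨y₀, hy₀⟩ := hint
  have hsub : (fun z => z - y₀) '' interior S ⊆ closure (T '' V) := by
    rintro _ ⟨z, hz, rfl⟩
    refine map_mem_closure₂ continuous_sub (interior_subset hz) (interior_subset hy₀) ?_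
    rintro _ ⟨u, hu, rfl⟩ _ ⟨v, hv, rfl⟩
    exact ⟨u - v, hWV u hu v hv, map_sub T u v⟩
  have hopen : IsOpen ((fun z => z - y₀) '' interior S) :=
    (Homeomorph.subRight y₀).isOpenMap _ isOpen_interior
  have h0 : (0 : Y) ∈ (fun z => z - y₀) '' interior S := ⟨y₀, hy₀, sub_self y₀⟩
  exact mem_of_superset (hopen.mem_nhds h0) hsub

lemma image_mem_nhds (T : X →L[ℝ] Y) (hT : Function.Surjective T)
    {U : Set X} (hU : U ∈ 𝓝 (0 : X)) : T '' U ∈ 𝓝 (0 : Y) := by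
  classical
  -- a closed neighborhood inside U
  obtain ⟨C, hCmem, hCclosed, hCU⟩ := exists_mem_nhds_isClosed_subset hU
  -- an antitone basis of 𝓝 0 in X
  obtain ⟨b, hb⟩ := (𝓝 (0 : X)).exists_antitone_basis
  -- step construction
  have hstep : ∀ (s : Set X) (n : ℕ), ∃ s' : Set X, s ∈ 𝓝 (0 : X) →
      s' ∈ 𝓝 (0 : X) ∧ s' ⊆ b n ∧ (∀ a ∈ s', ∀ c ∈ s', a + c ∈ s) ∧
      (∀ a ∈ s', ∀ c ∈ s', a - c ∈ s) := by
    intro s n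
    by_cases h : s ∈ 𝓝 (0 : X)
    · obtain ⟨S1, hS1, hS1h⟩ := exists_nhds_zero_half h
      obtain ⟨S2, hS2, hS2h⟩ := exists_nhds_half_neg h
      refine ⟨S1 ∩ S2 ∩ b n, fun _ => ⟨inter_mem (inter_mem hS1 hS2) (hb.mem n),
        inter_subset_right, ?_, ?_⟩⟩
      · exact fun a ha c hc => hS1h a ha.1.1 c hc.1.1
      · exact fun a ha c hc => hS2h a ha.1.2 c hc.1.2
    · exact ⟨∅, fun h' => absurd h' h⟩
  choose Φ hΦ using hstep
  -- initial neighborhood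
  set V₀ : Set X := Φ C 0 with hV₀def
  have hV₀' := hΦ C 0 hCmem
  -- the sequence of neighborhoods
  set V : ℕ → Set X := fun n => Nat.rec V₀ (fun n s => Φ s (n + 1)) n with hV
  have hV0 : V 0 = V₀ := rfl
  have hVsucc : ∀ n, V (n + 1) = Φ (V n) (n + 1) := fun n => rfl
  have hVmem : ∀ n, V n ∈ 𝓝 (0 : X) := by
    intro n
    induction n with
    | zero => exact hV₀'.1
    | succ n ih => rw [hVsucc]; exact (hΦ (V n) (n + 1) ih).1
  have hVb : ∀ n, V n ⊆ b n := by
    intro n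
    cases n with
    | zero => exact hV₀'.2.1
    | succ n => rw [hVsucc]; exact (hΦ (V n) (n + 1) (hVmem n)).2.1
  have hVsum : ∀ n, ∀ a ∈ V (n + 1), ∀ c ∈ V (n + 1), a + c ∈ V n := by
    intro n
    rw [hVsucc]
    exact (hΦ (V n) (n + 1) (hVmem n)).2.2.1
  have hVsub : ∀ n, ∀ a ∈ V (n + 1), ∀ c ∈ V (n + 1), a - c ∈ V n := by
    intro n
    rw [hVsucc]
    exact (hΦ (V n) (n + 1) (hVmem n)).2.2.2
  have hV0mem : ∀ n, (0 : X) ∈ V n := fun n => mem_of_mem_nhds (hVmem n)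
  -- conclusion: closure (T '' V 0) ⊆ T '' U
  have hkey : closure (T '' (V 0)) ⊆ T '' U := by
    intro y hy
    -- build the approximating sequence
    have hgrow : ∀ (n : ℕ) (s : X), y - T s ∈ closure (T '' V n) →
        ∃ x, x ∈ V n ∧ y - T (s + x) ∈ closure (T '' V (n + 1)) := by
      intro n s hs
      have hnb : closure (T '' V (n + 1)) ∈ 𝓝 (0 : Y) :=
        closure_image_mem_nhds T hT (hVmem (n + 1))
      have hpre : (fun w => (y - T s) - w) ⁻¹' closure (T '' V (n + 1)) ∈ 𝓝 (y - T s) := by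
        apply ContinuousAt.preimage_mem_nhds (by fun_prop)
        simpa using hnb
      obtain ⟨w, hw1, hw2⟩ := mem_closure_iff_nhds.1 hs _ hpre
      obtain ⟨x, hx, rfl⟩ := hw2
      exact ⟨x, hx, by simpa [map_add, sub_sub] using hw1⟩
    choose! ξ hξ1 hξ2 using hgrow
    set t : ℕ → X := fun n => Nat.rec 0 (fun n s => s + ξ n s) n with htdef
    have ht0 : t 0 = 0 := rfl
    have htsucc : ∀ n, t (n + 1) = t n + ξ n (t n) := fun n => rfl
    have hinv : ∀ n, y - T (t n) ∈ closure (T '' V n) := by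
      intro n
      induction n with
      | zero => simpa [ht0] using hy
      | succ n ih => rw [htsucc]; exact hξ2 n (t n) ih
    have hdiff : ∀ n, t (n + 1) - t n ∈ V n := by
      intro n
      rw [htsucc, add_sub_cancel_left]
      exact hξ1 n (t n) (hinv n)
    -- partial sum estimates
    have hclaim : ∀ (k n : ℕ), t (n + 1 + k) - t (n + 1) ∈ V n := by
      intro k
      induction k with
      | zero => intro n; simpa using hV0mem n
      | succ k ih =>
        intro n
        have e : n + 1 + (k + 1) = (n + 1) + 1 + k := by omega
        have h1 : t ((n + 1) + 1 + k) - t ((n + 1) + 1) ∈ V (n + 1) := ih (n + 1)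
        have h2 : t ((n + 1) + 1) - t (n + 1) ∈ V (n + 1) := hdiff (n + 1)
        have := hVsum n _ h1 _ h2
        rw [e]
        simpa [sub_add_sub_cancel] using this
    have hA : ∀ (N m : ℕ), N ≤ m → ∃ a ∈ V N, ∃ c ∈ V N, t m - t N = a + c := by
      intro N m hNm
      obtain ⟨k, rfl⟩ := Nat.exists_eq_add_of_le hNm
      cases k with
      | zero => exact ⟨0, hV0mem N, 0, hV0mem N, by simp⟩
      | succ k =>
        refine ⟨t (N + 1 + k) - t (N + 1), hclaim k N, t (N + 1) - t N, hdiff N, ?_⟩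
        have e : N + (k + 1) = N + 1 + k := by omega
        rw [e, sub_add_sub_cancel]
    -- t is Cauchy
    have hcauchy : CauchySeq t := by
      rw [cauchySeq_iff]
      intro s hs
      rw [uniformity_eq_comap_nhds_zero X, Filter.mem_comap] at hs
      obtain ⟨W, hWmem, hWsub⟩ := hs
      obtain ⟨n₀, -, hn₀⟩ := hb.toHasBasis.mem_iff.1 hWmem
      refine ⟨n₀ + 2, fun k hk l hl => ?_⟩
      apply hWsub
      show t l - t k ∈ W
      apply hn₀
      apply hVb
      obtain ⟨a₁, ha₁, c₁, hc₁, he₁⟩ := hA (n₀ + 2) l hl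
      obtain ⟨a₂, ha₂, c₂, hc₂, he₂⟩ := hA (n₀ + 2) k hk
      have h1 : a₁ + c₁ ∈ V (n₀ + 1) := hVsum (n₀ + 1) _ ha₁ _ hc₁
      have h2 : a₂ + c₂ ∈ V (n₀ + 1) := hVsum (n₀ + 1) _ ha₂ _ hc₂
      have : (a₁ + c₁) - (a₂ + c₂) ∈ V n₀ := hVsub n₀ _ h1 _ h2
      have he : t l - t k = (a₁ + c₁) - (a₂ + c₂) := by
        rw [← he₁, ← he₂]; abel
      rwa [he]
    obtain ⟨x, hx⟩ := cauchySeq_tendsto_of_complete hcauchy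
    -- t n stays in C
    have htC : ∀ n, t n ∈ C := by
      intro n
      cases n with
      | zero => simpa [ht0] using hV₀'.2.2.1 0 (hV0mem 0) 0 (hV0mem 0)
      | succ m =>
        have h1 : t (m + 1) - t 1 ∈ V 0 := by
          have := hclaim m 0
          simpa [Nat.add_comm] using this
        have h2 : t 1 - t 0 ∈ V 0 := hdiff 0
        have := hV₀'.2.2.1 _ h1 _ h2
        rw [ht0] at this
        simpa [sub_add_sub_cancel, sub_zero] using this
    have hxC : x ∈ C := hCclosed.mem_of_tendsto hx (Filter.Eventually.of_forall htC)
    -- T x = y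
    have hlim : Filter.Tendsto (fun n => y - T (t n)) atTop (𝓝 (y - T x)) :=
      tendsto_const_nhds.sub ((T.continuous.tendsto x).comp hx)
    have hzero : y - T x = 0 := by
      by_contra hne
      have hmem : ∀ W' ∈ 𝓝 (0 : Y), y - T x ∈ W' := by
        intro W' hW'
        obtain ⟨Wc, hWcmem, hWcclosed, hWcsub⟩ := exists_mem_nhds_isClosed_subset hW'
        have hpre : T ⁻¹' Wc ∈ 𝓝 (0 : X) := by
          apply ContinuousAt.preimage_mem_nhds (T.continuous.continuousAt)
          simpa using hWcmem
        obtain ⟨n₀, -, hn₀⟩ := hb.toHasBasis.mem_iff.1 hpre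
        have hev : ∀ n ≥ n₀, y - T (t n) ∈ Wc := by
          intro n hn
          have h1 : closure (T '' V n) ⊆ Wc := by
            rw [← hWcclosed.closure_eq]
            apply closure_mono
            rintro _ ⟨u, hu, rfl⟩
            exact hn₀ (hb.antitone hn (hVb n hu))
          exact h1 (hinv n)
        apply hWcsub
        exact hWcclosed.mem_of_tendsto hlim (Filter.eventually_atTop.2 ⟨n₀, hev⟩)
      have : y - T x ∈ ({y - T x}ᶜ : Set Y) :=
        hmem _ ((isOpen_compl_singleton).mem_nhds (by simpa using (Ne.symm hne)))
      simp at this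
    exact ⟨x, hCU hxC, (sub_eq_zero.1 hzero).symm⟩
  have h0 : closure (T '' V 0) ∈ 𝓝 (0 : Y) := closure_image_mem_nhds T hT (hVmem 0)
  exact mem_of_superset h0 hkey

theorem isOpenMap_of_surjective (T : X →L[ℝ] Y) (hT : Function.Surjective T) :
    IsOpenMap T := by
  intro U hU
  rw [isOpen_iff_mem_nhds]
  rintro _ ⟨x, hx, rfl⟩
  have hV : (fun z => z - x) '' U ∈ 𝓝 (0 : X) := by
    have : (0 : X) ∈ (fun z => z - x) '' U := ⟨x, hx, sub_self x⟩
    exact (((Homeomorph.subRight x).isOpenMap _ hU)).mem_nhds this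
  have := image_mem_nhds T hT hV
  have himg : (fun w => w + T x) '' (T '' ((fun z => z - x) '' U)) = T '' U := by
    ext w
    constructor
    · rintro ⟨_, ⟨_, ⟨u, hu, rfl⟩, rfl⟩, rfl⟩
      exact ⟨u, hu, by simp [map_sub]⟩
    · rintro ⟨u, hu, rfl⟩
      exact ⟨T u - T x, ⟨u - x, ⟨u, hu, rfl⟩, map_sub T u x⟩, by simp⟩
  rw [← himg]
  simpa using (Homeomorph.addRight (T x)).isOpenMap.image_mem_nhds this

end OpenMapping
section FM

variable {E : Type*} [AddCommGroup E] [Module ℝ E] [TopologicalSpace E]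

lemma isPolyhedralConvex_of_fintype {ι : Type*} [Fintype ι] (f : ι → E →L[ℝ] ℝ) (α : ι → ℝ) :
    IsPolyhedralConvex {x : E | ∀ i, f i x ≤ α i} := by
  obtain ⟨e⟩ : Nonempty (ι ≃ Fin (Fintype.card ι)) := ⟨Fintype.equivFin ι⟩
  refine ⟨Fintype.card ι, fun j => f (e.symm j), fun j => α (e.symm j), ?_⟩
  ext x
  simp only [Set.mem_setOf_eq]
  constructor
  · intro h j; exact h _
  · intro h i; simpa using h (e i)

lemma fm_step {n : ℕ} (f : Fin n → E →L[ℝ] ℝ) (α : Fin n → ℝ) (z : E) :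
    IsPolyhedralConvex {x : E | ∃ t : ℝ, ∀ i, f i (x - t • z) ≤ α i} := by
  classical
  set g : (Fin n ⊕ Fin n × Fin n) → E →L[ℝ] ℝ :=
    Sum.elim (fun i => if f i z = 0 then f i else 0)
      (fun p => if 0 < f p.1 z ∧ f p.2 z < 0 then f p.1 z • f p.2 - f p.2 z • f p.1 else 0) with hg
  set β : (Fin n ⊕ Fin n × Fin n) → ℝ :=
    Sum.elim (fun i => if f i z = 0 then α i else 0)
      (fun p => if 0 < f p.1 z ∧ f p.2 z < 0 then f p.1 z * α p.2 - f p.2 z * α p.1 else 0) with hβ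
  have hset : {x : E | ∃ t : ℝ, ∀ i, f i (x - t • z) ≤ α i} = {x | ∀ j, g j x ≤ β j} := by
    ext x
    simp only [Set.mem_setOf_eq]
    constructor
    · rintro ⟨t, ht⟩ j
      have ht' : ∀ i, f i x - t * f i z ≤ α i := by
        intro i; have := ht i; rwa [map_sub, map_smul, smul_eq_mul] at this
      rcases j with i | ⟨i, j⟩
      · simp only [hg, hβ, Sum.elim_inl]
        split_ifs with h
        · have := ht' i; rw [h] at this; simpa using this
        · simp
      · simp only [hg, hβ, Sum.elim_inr]
        split_ifs with h
        · obtain ⟨hi, hj⟩ := h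
          have h1 := ht' i
          have h2 := ht' j
          simp only [ContinuousLinearMap.sub_apply, ContinuousLinearMap.coe_smul',
            Pi.smul_apply, smul_eq_mul]
          have hA : 0 ≤ f i z * (α j - (f j x - t * f j z)) := mul_nonneg hi.le (by linarith)
          have hB : 0 ≤ (-f j z) * (α i - (f i x - t * f i z)) :=
            mul_nonneg (by linarith) (by linarith)
          nlinarith [hA, hB]
        · simp
    · intro hgx
      have hzero : ∀ i, f i z = 0 → f i x ≤ α i := by
        intro i hi
        have := hgx (Sum.inl i)
        simpa only [hg, hβ, Sum.elim_inl, if_pos hi] using this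
      have hpair : ∀ i j, 0 < f i z → f j z < 0 →
          f i z * f j x - f j z * f i x ≤ f i z * α j - f j z * α i := by
        intro i j hi hj
        have := hgx (Sum.inr (i, j))
        simp only [hg, hβ, Sum.elim_inr, if_pos (And.intro hi hj),
          ContinuousLinearMap.sub_apply, ContinuousLinearMap.coe_smul',
          Pi.smul_apply, smul_eq_mul] at this
        linarith
      set P : Finset (Fin n) := Finset.univ.filter (fun i => 0 < f i z) with hP
      set N : Finset (Fin n) := Finset.univ.filter (fun i => f i z < 0) with hN
      by_cases hPne : P.Nonempty
      · set t := P.sup' hPne (fun i => (f i x - α i) / f i z) with htdef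
        refine ⟨t, fun k => ?_⟩
        rw [map_sub, map_smul, smul_eq_mul]
        rcases lt_trichotomy (f k z) 0 with hk | hk | hk
        · obtain ⟨i₀, hi₀P, hi₀⟩ := Finset.exists_mem_eq_sup' hPne (fun i => (f i x - α i) / f i z)
          have hi₀pos : 0 < f i₀ z := by
            have := hi₀P; rw [hP] at this
            simpa using (Finset.mem_filter.1 this).2
          have hcon := hpair i₀ k hi₀pos hk
          have hb : (f k x - α k) * f i₀ z ≤ (f i₀ x - α i₀) * f k z := by linarith
          have hdiv : (f k x - α k) ≤ (f i₀ x - α i₀) * f k z / f i₀ z :=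
            (le_div_iff₀ hi₀pos).2 hb
          have hteq : t * f k z = (f i₀ x - α i₀) * f k z / f i₀ z := by
            rw [htdef, hi₀, div_mul_eq_mul_div]
          linarith [hteq ▸ hdiv]
        · have := hzero k hk; rw [hk]; simpa using this
        · have hkP : k ∈ P := by rw [hP]; simp [hk]
          have hle := Finset.le_sup' (fun i => (f i x - α i) / f i z) hkP
          rw [← htdef] at hle
          have := (div_le_iff₀ hk).1 hle
          linarith
      · by_cases hNne : N.Nonempty
        · set t := N.inf' hNne (fun j => (f j x - α j) / f j z) with htdef
          refine ⟨t, fun k => ?_⟩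
          rw [map_sub, map_smul, smul_eq_mul]
          rcases lt_trichotomy (f k z) 0 with hk | hk | hk
          · have hkN : k ∈ N := by rw [hN]; simp [hk]
            have hle := Finset.inf'_le (fun j => (f j x - α j) / f j z) hkN
            rw [← htdef] at hle
            have hmul : (f k) x - α k ≤ t * f k z := (le_div_iff_of_neg hk).1 hle
            linarith
          · have := hzero k hk; rw [hk]; simpa using this
          · exact absurd ⟨k, by rw [hP]; simp [hk]⟩ hPne
        · refine ⟨0, fun k => ?_⟩
          rw [map_sub, map_smul, smul_eq_mul, zero_mul, sub_zero]
          rcases lt_trichotomy (f k z) 0 with hk | hk | hk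
          · exact absurd ⟨k, by rw [hN]; simp [hk]⟩ hNne
          · exact hzero k hk
          · exact absurd ⟨k, by rw [hP]; simp [hk]⟩ hPne
  rw [hset]
  exact isPolyhedralConvex_of_fintype g β

lemma fm_general {D : Set E} (hD : IsPolyhedralConvex D) (z : E) :
    IsPolyhedralConvex {x : E | ∃ t : ℝ, x - t • z ∈ D} := by
  obtain ⟨n, f, α, rfl⟩ := hD
  exact fm_step f α z

lemma fm_span_list (l : List E) {D : Set E} (hD : IsPolyhedralConvex D) :
    IsPolyhedralConvex {x : E | ∃ w ∈ Submodule.span ℝ {y : E | y ∈ l}, x - w ∈ D} := by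
  induction l generalizing D with
  | nil =>
    have hset : {x : E | ∃ w ∈ Submodule.span ℝ {y : E | y ∈ ([] : List E)}, x - w ∈ D} = D := by
      ext x
      simp only [Set.mem_setOf_eq, List.not_mem_nil, setOf_false, Submodule.span_empty,
        Submodule.mem_bot]
      constructor
      · rintro ⟨w, rfl, h⟩; simpa using h
      · intro h; exact ⟨0, rfl, by simpa using h⟩
    rwa [hset]
  | cons z l ih =>
    have hins : {y : E | y ∈ z :: l} = insert z {y : E | y ∈ l} := by
      ext y; simp [List.mem_cons]
    have hset : {x : E | ∃ w ∈ Submodule.span ℝ {y : E | y ∈ z :: l}, x - w ∈ D} =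
        {x : E | ∃ t : ℝ, x - t • z ∈
          {x' : E | ∃ w ∈ Submodule.span ℝ {y : E | y ∈ l}, x' - w ∈ D}} := by
      ext x
      simp only [Set.mem_setOf_eq, hins]
      constructor
      · rintro ⟨w, hw, hxw⟩
        rw [Submodule.mem_span_insert] at hw
        obtain ⟨a, w', hw', rfl⟩ := hw
        exact ⟨a, w', hw', by rwa [sub_add_eq_sub_sub] at hxw⟩
      · rintro ⟨t, w', hw', hx⟩
        exact ⟨t • z + w', Submodule.mem_span_insert.2 ⟨t, w', hw', rfl⟩,
          by rwa [sub_add_eq_sub_sub]⟩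
    rw [hset]
    exact fm_general (ih hD) z

end FM

/-- A surjective continuous linear map between Fréchet spaces
maps polyhedral convex sets to polyhedral convex sets. -/
theorem image_polyhedral_of_surjective_frechet
    {X Y : Type*}
    [AddCommGroup X] [Module ℝ X] [UniformSpace X] [IsUniformAddGroup X]
    [ContinuousSMul ℝ X] [LocallyConvexSpace ℝ X] [T2Space X] [CompleteSpace X]
    [FirstCountableTopology X]
    [AddCommGroup Y] [Module ℝ Y] [UniformSpace Y] [IsUniformAddGroup Y]
    [ContinuousSMul ℝ Y] [LocallyConvexSpace ℝ Y] [T2Space Y] [CompleteSpace Y]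
    [FirstCountableTopology Y]
    (T : X →L[ℝ] Y) (hT : Function.Surjective T)
    (D : Set X) (hD : IsPolyhedralConvex D) :
    IsPolyhedralConvex (T '' D) := by
  classical
  obtain ⟨n, f, α, rfl⟩ := hD
  set Dset : Set X := {x | ∀ i, f i x ≤ α i} with hDset
  have hpolyD : IsPolyhedralConvex Dset := ⟨n, f, α, rfl⟩
  set F : X →ₗ[ℝ] (Fin n → ℝ) := LinearMap.pi (fun i => (f i : X →ₗ[ℝ] ℝ)) with hF
  set K : Submodule ℝ X := LinearMap.ker (T : X →ₗ[ℝ] Y) with hK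
  have hfg : (K.map F).FG := IsNoetherian.noetherian _
  obtain ⟨s, hs⟩ := hfg
  have hchoice : ∀ w ∈ s, ∃ zx : X, zx ∈ K ∧ F zx = w := by
    intro w hw
    have hwL : w ∈ K.map F := hs ▸ Submodule.subset_span hw
    obtain ⟨zx, hzx1, hzx2⟩ := Submodule.mem_map.1 hwL
    exact ⟨zx, hzx1, hzx2⟩
  choose! ζ hζK hζF using hchoice
  set l : List X := s.toList.map ζ with hl
  have hpolyE := fm_span_list l hpolyD
  set ESet : Set X := {x : X | ∃ w ∈ Submodule.span ℝ {y : X | y ∈ l}, x - w ∈ Dset} with hESet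
  have hZK : Submodule.span ℝ {y : X | y ∈ l} ≤ K := by
    rw [Submodule.span_le]
    rintro y hy
    simp only [hl, Set.mem_setOf_eq, List.mem_map] at hy
    obtain ⟨w, hw, rfl⟩ := hy
    exact hζK w (Finset.mem_toList.1 hw)
  have hLZ : K.map F ≤ (Submodule.span ℝ {y : X | y ∈ l}).map F := by
    rw [← hs, Submodule.span_le]
    intro w hw
    have hws : w ∈ s := Finset.mem_coe.1 hw
    refine ⟨ζ w, Submodule.subset_span ?_, hζF w hws⟩
    simp only [hl, Set.mem_setOf_eq, List.mem_map]
    exact ⟨w, Finset.mem_toList.2 hws, rfl⟩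
  have hEK : ESet = {x : X | ∃ k ∈ K, x - k ∈ Dset} := by
    ext x
    simp only [hESet, Set.mem_setOf_eq]
    constructor
    · rintro ⟨w, hw, h⟩; exact ⟨w, hZK hw, h⟩
    · rintro ⟨k, hk, hxk⟩
      have hFk : F k ∈ (Submodule.span ℝ {y : X | y ∈ l}).map F := hLZ ⟨k, hk, rfl⟩
      obtain ⟨w, hwZ, hFw⟩ := hFk
      refine ⟨w, hwZ, ?_⟩
      show ∀ i, f i (x - w) ≤ α i
      intro i
      have hkw : f i (k - w) = 0 := by
        have h0 : F (k - w) = 0 := by rw [map_sub, hFw, sub_self]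
        have h1 := congrFun (congrArg (fun v => (v : Fin n → ℝ)) h0) i
        simpa [hF, LinearMap.pi_apply] using h1
      have heq : f i (x - w) = f i (x - k) := by
        have hxdec : x - w = (x - k) + (k - w) := by abel
        rw [hxdec, map_add, hkw, add_zero]
      rw [heq]
      exact hxk i
  obtain ⟨m, g, β, hg⟩ := hpolyE
  rcases Set.eq_empty_or_nonempty Dset with hDe | ⟨x₀, hx₀⟩
  · refine ⟨1, fun _ => 0, fun _ => -1, ?_⟩
    rw [hDe, Set.image_empty]
    ext y
    simp only [Set.mem_empty_iff_false, Set.mem_setOf_eq, ContinuousLinearMap.zero_apply,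
      false_iff]
    intro h
    linarith [h 0]
  · have hopen : IsOpenMap T := isOpenMap_of_surjective T hT
    have hker : ∀ j (k : X), T k = 0 → g j k = 0 := by
      intro j k hk
      have hkK : k ∈ K := by rw [hK]; exact LinearMap.mem_ker.2 hk
      have hmem : ∀ t : ℝ, g j x₀ + t * g j k ≤ β j := by
        intro t
        have hx : x₀ + t • k ∈ ESet := by
          rw [hEK]
          exact ⟨t • k, Submodule.smul_mem _ t hkK, by simpa using hx₀⟩
        rw [hg] at hx
        simp only [Set.mem_setOf_eq] at hx
        have hxx := hx j
        rwa [map_add, map_smul, smul_eq_mul] at hxx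
      by_contra hne
      have ht := hmem ((β j + 1 - g j x₀) / g j k)
      rw [div_mul_cancel₀ _ hne] at ht
      linarith
    have hfact : ∀ j, ∃ h : Y →L[ℝ] ℝ, ∀ x, h (T x) = g j x := by
      intro j
      have hwd : ∀ x x' : X, T x = T x' → g j x = g j x' := by
        intro x x' hxx
        have h0 := hker j (x - x') (by rw [map_sub, hxx, sub_self])
        rw [map_sub] at h0
        linarith
      have hTσ : ∀ y : Y, T (Function.surjInv hT y) = y := fun y => Function.surjInv_eq hT y
      let h₀ : Y →ₗ[ℝ] ℝ :=
        { toFun := fun y => g j (Function.surjInv hT y)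
          map_add' := fun y₁ y₂ => by
            show g j (Function.surjInv hT (y₁ + y₂)) =
              g j (Function.surjInv hT y₁) + g j (Function.surjInv hT y₂)
            have hTeq : T (Function.surjInv hT (y₁ + y₂)) =
                T (Function.surjInv hT y₁ + Function.surjInv hT y₂) := by
              rw [map_add, hTσ, hTσ, hTσ]
            rw [hwd _ _ hTeq, map_add]
          map_smul' := fun r y => by
            show g j (Function.surjInv hT (r • y)) =
              (RingHom.id ℝ) r • g j (Function.surjInv hT y)
            have hTeq : T (Function.surjInv hT (r • y)) =
                T (r • Function.surjInv hT y) := by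
              rw [map_smul, hTσ, hTσ]
            rw [hwd _ _ hTeq, map_smul, smul_eq_mul]
            rfl }
      have hcomp : ∀ x, h₀ (T x) = g j x := fun x => hwd _ _ (hTσ (T x))
      have hcont : Continuous h₀ := by
        rw [continuous_def]
        intro U hU
        have hpre : h₀ ⁻¹' U = T '' ((g j) ⁻¹' U) := by
          ext y
          constructor
          · intro hy
            exact ⟨Function.surjInv hT y, hy, hTσ y⟩
          · rintro ⟨x, hx, rfl⟩
            show h₀ (T x) ∈ U
            rwa [hcomp]
        rw [hpre]
        exact hopen _ (hU.preimage (g j).continuous)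
      exact ⟨⟨h₀, hcont⟩, hcomp⟩
    choose h hh using hfact
    refine ⟨m, h, β, ?_⟩
    ext y
    simp only [Set.mem_image, Set.mem_setOf_eq]
    constructor
    · rintro ⟨x, hx, rfl⟩ j
      rw [hh j x]
      have hxE : x ∈ ESet := by
        rw [hEK]
        exact ⟨0, Submodule.zero_mem _, by simpa using hx⟩
      rw [hg] at hxE
      exact hxE j
    · intro hy
      obtain ⟨x, rfl⟩ := hT y
      have hxE : x ∈ ESet := by
        rw [hg]
        intro j
        rw [← hh j x]
        exact hy j
      rw [hEK] at hxE
      obtain ⟨k, hkK, hxk⟩ := hxE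
      refine ⟨x - k, hxk, ?_⟩
      have hTk : T k = 0 := by rw [hK] at hkK; exact LinearMap.mem_ker.1 hkK
      rw [map_sub, hTk, sub_zero]
end
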